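/- Let f : ℝ → ℝ be differentiable, let γ : ℝ × ℝ → ℝ be continuous, let λ : ℝ → ℝ be differentiable at 0 with λ(0) = λ₀ ≠ 0, and let φ : ℝ × ℝ → ℝ be continuously differentiable, satisfying φ(t, λ(t)·s) = f(φ(t,s)) − t·γ(φ(t,s), φ(t, s/λ(t))) for all t in a neighborhood of 0 and all s ∈ ℝ. Write φ₀ = φ(0,·), ψ(s) = ∂φ/∂t(0,s), and let s_c ∈ ℝ with f'(φ₀(s_c)) = 0. Then φ₀'(λ₀·s_c) = 0 and ψ(λ₀·s_c) = −γ(φ₀(s_c), φ₀(s_c/λ₀)). -/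

import Mathlib

/-- Equation (psi(v)) of the appendix of the paper: evaluating the
variational equation at a parameter `s_c` over the critical point of `f`,
both first-order terms vanish, giving `φ₀'(λ₀ s_c) = 0` and
`ψ(λ₀ s_c) = −γ(c, c₋₁)` with `c = φ₀(s_c)` and `c₋₁ = φ₀(s_c/λ₀)`. -/
theorem variational_equation_at_critical_point
    (f : ℝ → ℝ) (hf : Differentiable ℝ f)
    (γ : ℝ → ℝ → ℝ) (hγ : Continuous fun p : ℝ × ℝ => γ p.1 p.2)
    (l : ℝ → ℝ) (lam₀ : ℝ) (hl0 : l 0 = lam₀) (hlam₀ : lam₀ ≠ 0)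
    (hl : DifferentiableAt ℝ l 0)
    (φ : ℝ → ℝ → ℝ) (hφ : ContDiff ℝ 1 (fun p : ℝ × ℝ => φ p.1 p.2))
    (heq : ∀ᶠ t in nhds 0, ∀ s : ℝ,
      φ t (l t * s) = f (φ t s) - t * γ (φ t s) (φ t (s / l t)))
    (s_c : ℝ) (hc : deriv f (φ 0 s_c) = 0) :
    deriv (φ 0) (lam₀ * s_c) = 0 ∧
    deriv (fun t => φ t (lam₀ * s_c)) 0 = -γ (φ 0 s_c) (φ 0 (s_c / lam₀)) := by
  set Φ : ℝ × ℝ → ℝ := fun p => φ p.1 p.2 with hΦdef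
  have hΦ : Differentiable ℝ Φ := hφ.differentiable one_ne_zero
  set L := fderiv ℝ Φ (0, lam₀ * s_c) with hLdef
  have hL : HasFDerivAt Φ L (0, lam₀ * s_c) := (hΦ _).hasFDerivAt
  -- partial derivative in s at lam₀ * s_c
  have hD2 : HasDerivAt (φ 0) (L (0, 1)) (lam₀ * s_c) := by
    have h1 : HasDerivAt (fun s : ℝ => ((0 : ℝ), s)) ((0 : ℝ), (1 : ℝ)) (lam₀ * s_c) :=
      (hasDerivAt_const _ _).prodMk (hasDerivAt_id _)
    exact hL.comp_hasDerivAt _ h1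
  -- partial derivative in t at 0
  have hD1 : HasDerivAt (fun t => φ t (lam₀ * s_c)) (L (1, 0)) 0 := by
    have h1 : HasDerivAt (fun t : ℝ => (t, lam₀ * s_c)) ((1 : ℝ), (0 : ℝ)) 0 :=
      (hasDerivAt_id _).prodMk (hasDerivAt_const _ _)
    have h2 := HasFDerivAt.comp_hasDerivAt (0 : ℝ) hL h1
    exact h2
  -- equation at t = 0
  have h0 : ∀ s : ℝ, φ 0 (lam₀ * s) = f (φ 0 s) := by
    intro s
    have := heq.self_of_nhds s
    simpa [hl0] using this
  -- differentiate h0 in s at s_c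
  have hφ0 : ∀ x : ℝ, HasDerivAt (φ 0) (deriv (φ 0) x) x := by
    intro x
    have : DifferentiableAt ℝ (φ 0) x := by
      have h1 : HasDerivAt (fun s : ℝ => ((0 : ℝ), s)) ((0 : ℝ), (1 : ℝ)) x :=
        (hasDerivAt_const _ _).prodMk (hasDerivAt_id _)
      exact ((hΦ _).hasFDerivAt.comp_hasDerivAt _ h1).differentiableAt
    exact this.hasDerivAt
  have hm : HasDerivAt (fun s : ℝ => lam₀ * s) lam₀ s_c := by
    simpa using (hasDerivAt_id s_c).const_mul lam₀
  have hlhs : HasDerivAt (fun s : ℝ => φ 0 (lam₀ * s)) (L (0, 1) * lam₀) s_c :=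
    HasDerivAt.comp s_c hD2 hm
  have hrhs : HasDerivAt (fun s : ℝ => f (φ 0 s))
      (deriv f (φ 0 s_c) * deriv (φ 0) s_c) s_c :=
    HasDerivAt.comp s_c ((hf _).hasDerivAt) (hφ0 s_c)
  have hlhs' : HasDerivAt (fun s : ℝ => φ 0 (lam₀ * s))
      (deriv f (φ 0 s_c) * deriv (φ 0) s_c) s_c := by
    exact hrhs.congr_of_eventuallyEq (Filter.Eventually.of_forall h0)
  have hzero : L (0, 1) * lam₀ = 0 := by
    have := hlhs.unique hlhs'
    rw [this, hc, zero_mul]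
  have hL01 : L (0, 1) = 0 := by
    rcases mul_eq_zero.mp hzero with h | h
    · exact h
    · exact absurd h hlam₀
  constructor
  · rw [hD2.deriv, hL01]
  -- second part
  · set g : ℝ → ℝ := fun t => γ (φ t s_c) (φ t (s_c / l t)) with hgdef
    have hcontφ : Continuous Φ := hΦ.continuous
    have hlcont : ContinuousAt l 0 := hl.continuousAt
    have hg : ContinuousAt g 0 := by
      have hp1 : ContinuousAt (fun t : ℝ => φ t s_c) 0 := by
        have : ContinuousAt (fun t : ℝ => (t, s_c)) 0 :=
          continuousAt_id.prodMk continuousAt_const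
        exact hcontφ.continuousAt.comp this
      have hdiv : ContinuousAt (fun t : ℝ => s_c / l t) 0 :=
        continuousAt_const.div hlcont (by rw [hl0]; exact hlam₀)
      have hp2 : ContinuousAt (fun t : ℝ => φ t (s_c / l t)) 0 := by
        have : ContinuousAt (fun t : ℝ => (t, s_c / l t)) 0 :=
          continuousAt_id.prodMk hdiv
        exact hcontφ.continuousAt.comp this
      exact hγ.continuousAt.comp (hp1.prodMk hp2)
    -- derivative of t * g t at 0 is g 0
    have hmul : HasDerivAt (fun t => t * g t) (g 0) 0 := by
      rw [hasDerivAt_iff_tendsto_slope]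
      have hev : ∀ᶠ t in nhdsWithin (0 : ℝ) {(0 : ℝ)}ᶜ,
          g t = slope (fun t => t * g t) 0 t := by
        filter_upwards [self_mem_nhdsWithin] with t ht
        have ht' : (t : ℝ) ≠ 0 := ht
        rw [slope_def_field]
        field_simp
        ring
      exact ((hg.tendsto).mono_left nhdsWithin_le_nhds).congr' hev
    -- derivative of f (φ t s_c) at 0
    have hA : HasDerivAt (fun t => φ t s_c) (deriv (fun t => φ t s_c) 0) 0 := by
      have h1 : HasDerivAt (fun t : ℝ => (t, s_c)) ((1 : ℝ), (0 : ℝ)) 0 :=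
        (hasDerivAt_id _).prodMk (hasDerivAt_const _ _)
      exact ((hΦ _).hasFDerivAt.comp_hasDerivAt _ h1).differentiableAt.hasDerivAt
    have hB : HasDerivAt (fun t => f (φ t s_c))
        (deriv f (φ 0 s_c) * deriv (fun t => φ t s_c) 0) 0 :=
      HasDerivAt.comp 0 ((hf _).hasDerivAt) hA
    have hRHS : HasDerivAt (fun t => f (φ t s_c) - t * g t) (0 - g 0) 0 := by
      have := hB.sub hmul
      rwa [hc, zero_mul] at this
    -- LHS derivative
    have hinner : HasDerivAt (fun t : ℝ => (t, l t * s_c)) ((1 : ℝ), deriv l 0 * s_c) 0 :=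
      (hasDerivAt_id _).prodMk (hl.hasDerivAt.mul_const s_c)
    have hL' : HasFDerivAt Φ L ((fun t : ℝ => (t, l t * s_c)) 0) := by
      simpa [hl0] using hL
    have hLHS : HasDerivAt (fun t => φ t (l t * s_c)) (L (1, deriv l 0 * s_c)) 0 := by
      have h2 := HasFDerivAt.comp_hasDerivAt (0 : ℝ) hL' hinner
      exact h2
    have hEq : (fun t => f (φ t s_c) - t * g t) =ᶠ[nhds (0 : ℝ)]
        (fun t => φ t (l t * s_c)) := by
      filter_upwards [heq] with t ht
      exact (ht s_c).symm
    have hLHS' : HasDerivAt (fun t => φ t (l t * s_c)) (0 - g 0) 0 :=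
      hRHS.congr_of_eventuallyEq hEq.symm
    have hval : L (1, deriv l 0 * s_c) = 0 - g 0 := hLHS.unique hLHS'
    have hdecomp : L (1, deriv l 0 * s_c) = L (1, 0) + (deriv l 0 * s_c) * L (0, 1) := by
      have : ((1 : ℝ), deriv l 0 * s_c) = (1, 0) + (deriv l 0 * s_c) • ((0 : ℝ), (1 : ℝ)) := by
        simp [Prod.ext_iff]
      rw [this, map_add, map_smul]
      simp
    rw [hD1.deriv]
    have : L (1, 0) = -g 0 := by
      rw [hdecomp, hL01, mul_zero, add_zero] at hval
      linarith [hval]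
    rw [this, hgdef]
    simp [hl0]
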